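/- Let z ∈ ℂ with Im z ≠ 0 and define h = -∂² + 2/(x - z)². Then ψ(x) = 1/(x - z) satisfies h ψ = 0, ψ ∈ L²(ℝ), and φ(x) = (x - z)/2 satisfies h φ = ψ, i.e., φ is an associated function of first order of h at spectral value 0. -/

import Mathlib

open MeasureTheory

/-- The non-Hermitian Hamiltonian `h = -∂² + 2/(x - z)²`. -/
noncomputable def hSing (z : ℂ) (f : ℝ → ℂ) : ℝ → ℂ :=
  fun x => -(deriv (deriv f) x) + 2 / ((x : ℂ) - z) ^ 2 * f x

lemma sub_ne (z : ℂ) (hz : z.im ≠ 0) (x : ℝ) : (x : ℂ) - z ≠ 0 := by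
  intro h
  apply hz
  have := congrArg Complex.im h
  simpa using this

lemma hasDerivAt_psi (z : ℂ) (hz : z.im ≠ 0) (x : ℝ) :
    HasDerivAt (fun y : ℝ => ((y : ℂ) - z)⁻¹) (-(((x : ℂ) - z) ^ 2)⁻¹) x := by
  have h1 : HasDerivAt (fun w : ℂ => (w - z)⁻¹) (-1 / ((x : ℂ) - z) ^ 2) (x : ℂ) :=
    ((hasDerivAt_id _).sub_const z).inv (sub_ne z hz x)
  have := h1.comp_ofReal
  simpa [neg_div] using this

lemma deriv_psi (z : ℂ) (hz : z.im ≠ 0) :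
    deriv (fun y : ℝ => ((y : ℂ) - z)⁻¹) = fun y : ℝ => -(((y : ℂ) - z) ^ 2)⁻¹ := by
  funext y
  exact (hasDerivAt_psi z hz y).deriv

lemma hasDerivAt_psi2 (z : ℂ) (hz : z.im ≠ 0) (x : ℝ) :
    HasDerivAt (fun y : ℝ => -(((y : ℂ) - z) ^ 2)⁻¹) (2 * (((x : ℂ) - z) ^ 3)⁻¹) x := by
  have h1 : HasDerivAt (fun w : ℂ => ((w - z) ^ 2)⁻¹)
      (-(2 * ((x : ℂ) - z)) / (((x:ℂ) - z) ^ 2) ^ 2) (x : ℂ) := by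
    have hp : HasDerivAt (fun w : ℂ => (w - z) ^ 2) (2 * ((x : ℂ) - z)) (x : ℂ) := by
      have := ((hasDerivAt_id ((x:ℂ))).sub_const z).fun_pow 2
      simpa [mul_comm] using this
    exact hp.inv (pow_ne_zero 2 (sub_ne z hz x))
  have h2 := (h1.comp_ofReal).neg
  have hne := sub_ne z hz x
  have key : -(-(2 * ((x : ℂ) - z)) / (((x:ℂ) - z) ^ 2) ^ 2) = 2 * (((x : ℂ) - z) ^ 3)⁻¹ := by
    field_simp
  rw [key] at h2
  exact h2

/-- For `Im z ≠ 0`: `ψ = 1/(x - z)` satisfies `h ψ = 0`, is square integrable on `ℝ`,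
and `φ = (x - z)/2` satisfies `h φ = ψ`, i.e. `φ` is a first-order associated function
of `h` at spectral value `0`. -/
theorem stmt_12 (z : ℂ) (hz : z.im ≠ 0) :
    (∀ x : ℝ, hSing z (fun y => 1 / ((y : ℂ) - z)) x = 0) ∧
    MeasureTheory.MemLp (fun x : ℝ => 1 / ((x : ℂ) - z)) 2 MeasureTheory.volume ∧
    (∀ x : ℝ, hSing z (fun y => ((y : ℂ) - z) / 2) x = 1 / ((x : ℂ) - z)) := by
  refine ⟨?_, ?_, ?_⟩
  · intro x
    have hne := sub_ne z hz x
    unfold hSing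
    simp only [one_div]
    rw [deriv_psi z hz, (hasDerivAt_psi2 z hz x).deriv]
    field_simp
    ring
  · have hcont : Continuous (fun x : ℝ => 1 / ((x : ℂ) - z)) := by
      simp only [one_div]
      exact (Complex.continuous_ofReal.sub continuous_const).inv₀ (fun x => sub_ne z hz x)
    rw [memLp_two_iff_integrable_sq_norm hcont.aestronglyMeasurable]
    have him : z.im ≠ 0 := hz
    have h1 : Integrable (fun t : ℝ => (1 + (t / z.im) ^ 2)⁻¹) volume :=
      integrable_inv_one_add_sq.comp_div him
    have h2 : Integrable (fun x : ℝ => (1 + ((x - z.re) / z.im) ^ 2)⁻¹) volume :=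
      h1.comp_sub_right z.re
    have h3 := h2.const_mul ((z.im ^ 2)⁻¹)
    refine h3.congr (Filter.Eventually.of_forall fun x => ?_)
    have hsq : z.im ^ 2 ≠ 0 := pow_ne_zero 2 him
    have hnz : (x - z.re) ^ 2 + z.im ^ 2 ≠ 0 := by positivity
    have hn : ‖1 / ((x : ℂ) - z)‖ ^ 2 = ((x - z.re) ^ 2 + z.im ^ 2)⁻¹ := by
      rw [norm_div, norm_one, one_div, inv_pow, Complex.sq_norm]
      congr 1
      simp [Complex.normSq_apply, Complex.sub_re, Complex.sub_im]
      ring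
    simp only [hn]
    field_simp
    ring
  · intro x
    have hne := sub_ne z hz x
    unfold hSing
    have hd : deriv (fun y : ℝ => ((y : ℂ) - z) / 2) = fun _ : ℝ => (1/2 : ℂ) := by
      funext y
      have : HasDerivAt (fun y : ℝ => ((y : ℂ) - z) / 2) (1/2 : ℂ) y := by
        have h1 : HasDerivAt (fun w : ℂ => (w - z) / 2) (1/2 : ℂ) (y : ℂ) := by
          simpa using ((hasDerivAt_id ((y:ℂ))).sub_const z).div_const 2
        exact h1.comp_ofReal
      exact this.deriv
    rw [hd]
    simp
    field_simp
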